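/- arXiv:2410.08051 — 8 statements merged into one kernel-verified Lean document; each statement's English description precedes it below -/
import Mathlib

section
/- Let A and B be 2^n × 2^n unitary matrices over ℂ and let 0 ≤ ε₁ < 1 and 0 ≤ ε₂ < 1 be real numbers such that (1/2^n)|Tr(A)| ≥ 1 − ε₁ and (1/2^n)·Re(Tr(B)) ≥ 1 − ε₂. Then (1/2^n)|Tr(A B)| ≥ 1 − ε₁ − √(2ε₂). -/
open Matrix
open scoped ComplexOrder

private lemma trace_conjT_mul {ι : Type*} [Fintype ι] [DecidableEq ι] (M : Matrix ι ι ℂ) :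
    (Mᴴ * M).trace = ∑ j, ∑ i, (Complex.normSq (M i j) : ℂ) := by
  simp [Matrix.trace, Matrix.mul_apply, Matrix.conjTranspose_apply, Matrix.diag,
    Complex.normSq_eq_conj_mul_self]

theorem abs_trace_mul_ge_of_traces_large (n : ℕ) (ε₁ ε₂ : ℝ)
    (hε₁ : 0 ≤ ε₁) (hε₁' : ε₁ < 1) (hε₂ : 0 ≤ ε₂) (hε₂' : ε₂ < 1)
    (A B : Matrix (Fin (2 ^ n)) (Fin (2 ^ n)) ℂ)
    (hA : A ∈ Matrix.unitaryGroup (Fin (2 ^ n)) ℂ)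
    (hB : B ∈ Matrix.unitaryGroup (Fin (2 ^ n)) ℂ)
    (hTrA : 1 - ε₁ ≤ (1 / 2 ^ n) * ‖A.trace‖)
    (hTrB : 1 - ε₂ ≤ (1 / 2 ^ n) * B.trace.re) :
    1 - ε₁ - Real.sqrt (2 * ε₂) ≤ (1 / 2 ^ n) * ‖(A * B).trace‖ := by
  have hN : (0:ℝ) < 2 ^ n := by positivity
  set N : ℝ := 2 ^ n with hNdef
  have hcard : (Fintype.card (Fin (2 ^ n)) : ℝ) = N := by simp [hNdef]
  set M : Matrix (Fin (2 ^ n)) (Fin (2 ^ n)) ℂ := B - 1 with hM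
  have hAunit : Aᴴ * A = 1 := hA.1
  have hsumA : ∑ i, ∑ j, Complex.normSq (A i j) = N := by
    have h1 : (Aᴴ * A).trace = ∑ j, ∑ i, (Complex.normSq (A i j) : ℂ) := trace_conjT_mul A
    rw [hAunit] at h1
    have h2 : ((N : ℂ)) = ∑ j, ∑ i, (Complex.normSq (A i j) : ℂ) := by
      rw [← h1, Matrix.trace_one, ← hcard]; simp
    have h3 := congrArg Complex.re h2
    simp only [Complex.ofReal_re] at h3
    rw [h3, Complex.re_sum, Finset.sum_comm]
    congr 1; ext j
    rw [Complex.re_sum]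
    simp
  have hBunit : Bᴴ * B = 1 := hB.1
  have hsumM : ∑ i, ∑ j, Complex.normSq (M i j) = 2 * N - 2 * B.trace.re := by
    have h1 : (Mᴴ * M).trace = ∑ j, ∑ i, (Complex.normSq (M i j) : ℂ) := trace_conjT_mul M
    have h2 : (Mᴴ * M).trace = ((2 * N - 2 * B.trace.re : ℝ) : ℂ) := by
      have hexp : Mᴴ * M = 1 - Bᴴ - B + 1 := by
        simp only [hM, Matrix.conjTranspose_sub, Matrix.conjTranspose_one]
        rw [Matrix.sub_mul, Matrix.mul_sub, Matrix.mul_sub, hBunit]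
        noncomm_ring
      rw [hexp]
      simp only [Matrix.trace_add, Matrix.trace_sub, Matrix.trace_one,
        Matrix.trace_conjTranspose]
      have hcard' : (Fintype.card (Fin (2 ^ n)) : ℂ) = (N : ℂ) := by
        exact_mod_cast congrArg (fun x : ℝ => (x : ℂ)) hcard
      rw [hcard']
      have hconj : star B.trace + B.trace = 2 * (B.trace.re : ℂ) := by
        have := Complex.add_conj B.trace
        rw [add_comm] at this
        rw [show (star B.trace : ℂ) = (starRingEnd ℂ) B.trace from rfl, this]
        push_cast; ring
      push_cast
      linear_combination -hconj
    rw [h2] at h1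
    have h3 := congrArg Complex.re h1
    simp only [Complex.ofReal_re] at h3
    rw [h3, Complex.re_sum, Finset.sum_comm]
    congr 1; ext j
    rw [Complex.re_sum]; simp
  have hsumM_le : ∑ i, ∑ j, Complex.normSq (M i j) ≤ 2 * N * ε₂ := by
    rw [hsumM]
    have h : N * (1 - ε₂) ≤ B.trace.re := by
      rw [div_mul_eq_mul_div, one_mul, le_div_iff₀ hN] at hTrB
      linarith
    nlinarith
  have hCS : ‖(A * M).trace‖ ≤ N * Real.sqrt (2 * ε₂) := by
    have htr : (A * M).trace = ∑ p : Fin (2 ^ n) × Fin (2 ^ n), A p.1 p.2 * M p.2 p.1 := by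
      rw [Fintype.sum_prod_type]
      simp [Matrix.trace, Matrix.mul_apply, Matrix.diag]
    rw [htr]
    calc ‖∑ p : Fin (2 ^ n) × Fin (2 ^ n), A p.1 p.2 * M p.2 p.1‖
        ≤ ∑ p : Fin (2 ^ n) × Fin (2 ^ n),
            ‖A p.1 p.2‖ * ‖M p.2 p.1‖ := by
          refine (norm_sum_le _ _).trans (le_of_eq ?_)
          simp [norm_mul]
      _ ≤ Real.sqrt (∑ p : Fin (2 ^ n) × Fin (2 ^ n), ‖A p.1 p.2‖ ^ 2) *
          Real.sqrt (∑ p : Fin (2 ^ n) × Fin (2 ^ n), ‖M p.2 p.1‖ ^ 2) :=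
          Real.sum_mul_le_sqrt_mul_sqrt _ _ _
      _ ≤ Real.sqrt N * Real.sqrt (2 * N * ε₂) := by
          have h1 : ∑ p : Fin (2 ^ n) × Fin (2 ^ n), ‖A p.1 p.2‖ ^ 2 = N := by
            rw [Fintype.sum_prod_type]
            simp_rw [Complex.sq_norm]
            exact hsumA
          have h2 : ∑ p : Fin (2 ^ n) × Fin (2 ^ n), ‖M p.2 p.1‖ ^ 2
              ≤ 2 * N * ε₂ := by
            rw [Fintype.sum_prod_type]
            simp_rw [Complex.sq_norm]
            rw [Finset.sum_comm]
            exact hsumM_le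
          exact mul_le_mul (le_of_eq (by rw [h1])) (Real.sqrt_le_sqrt h2)
            (Real.sqrt_nonneg _) (Real.sqrt_nonneg _)
      _ = N * Real.sqrt (2 * ε₂) := by
          rw [← Real.sqrt_mul hN.le,
            show N * (2 * N * ε₂) = N ^ 2 * (2 * ε₂) by ring,
            Real.sqrt_mul (by positivity), Real.sqrt_sq hN.le]
  have hsplit : (A * B).trace = A.trace + (A * M).trace := by
    have h : A * B = A + A * M := by rw [hM, Matrix.mul_sub]; simp
    rw [h, Matrix.trace_add]
  have hlow : N * (1 - ε₁) ≤ ‖A.trace‖ := by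
    rw [div_mul_eq_mul_div, one_mul, le_div_iff₀ hN] at hTrA
    linarith
  have habs : ‖A.trace‖ - ‖(A * M).trace‖ ≤ ‖(A * B).trace‖ := by
    rw [hsplit]
    have h := norm_add_le (A.trace + (A * M).trace) (-(A * M).trace)
    simp only [add_neg_cancel_right, norm_neg] at h
    linarith
  rw [div_mul_eq_mul_div, one_mul, le_div_iff₀ hN]
  calc (1 - ε₁ - Real.sqrt (2 * ε₂)) * 2 ^ n = N * (1 - ε₁) - N * Real.sqrt (2 * ε₂) := by
        rw [hNdef]; ring
    _ ≤ ‖(A * B).trace‖ := by linarith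
end

section
/- Let A and B be 2^n × 2^n unitary matrices over ℂ and let 0 ≤ ε₁ < 1 and 0 ≤ ε₂ < 1 be real numbers such that (1/2^n)|Tr(A)| ≥ 1 − ε₁ and (1/2^n)·Re(Tr(B)) ≥ 1 − ε₂. If moreover B is a diagonal matrix whose diagonal entries all lie in {1, −1}, then (1/2^n)|Tr(A B)| ≥ 1 − ε₁ − 2ε₂. -/
open Matrix
open scoped ComplexOrder

theorem abs_trace_mul_ge_of_traces_large_diagonal (n : ℕ) (ε₁ ε₂ : ℝ)
    (hε₁ : 0 ≤ ε₁) (hε₁' : ε₁ < 1) (hε₂ : 0 ≤ ε₂) (hε₂' : ε₂ < 1)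
    (A B : Matrix (Fin (2 ^ n)) (Fin (2 ^ n)) ℂ)
    (hA : A ∈ Matrix.unitaryGroup (Fin (2 ^ n)) ℂ)
    (hB : B ∈ Matrix.unitaryGroup (Fin (2 ^ n)) ℂ)
    (hTrA : 1 - ε₁ ≤ (1 / 2 ^ n) * ‖A.trace‖)
    (hTrB : 1 - ε₂ ≤ (1 / 2 ^ n) * B.trace.re)
    (d : Fin (2 ^ n) → ℂ) (hBd : B = Matrix.diagonal d)
    (hd : ∀ i, d i = 1 ∨ d i = -1) :
    1 - ε₁ - 2 * ε₂ ≤ (1 / 2 ^ n) * ‖(A * B).trace‖ := by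
  set N : ℝ := (2 : ℝ) ^ n with hN
  have hNpos : (0 : ℝ) < N := by positivity
  set S : Finset (Fin (2 ^ n)) := Finset.univ.filter (fun i => d i = -1) with hS
  -- trace B real part = N - 2 |S|
  have hTrBval : B.trace.re = N - 2 * S.card := by
    rw [hBd, Matrix.trace_diagonal]
    rw [Complex.re_sum]
    rw [← Finset.sum_filter_add_sum_filter_not Finset.univ (fun i => d i = -1)]
    have h1 : ∀ i ∈ Finset.univ.filter (fun i => d i = -1), (d i).re = -1 := by
      intro i hi
      rw [Finset.mem_filter] at hi
      rw [hi.2]; simp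
    have h2 : ∀ i ∈ Finset.univ.filter (fun i => ¬ d i = -1), (d i).re = 1 := by
      intro i hi
      rw [Finset.mem_filter] at hi
      rcases hd i with h | h
      · rw [h]; simp
      · exact absurd h hi.2
    rw [Finset.sum_congr rfl h1, Finset.sum_congr rfl h2]
    simp only [Finset.sum_const, nsmul_eq_mul, mul_one, mul_neg_one]
    have hsum : S.card + (Finset.univ.filter (fun i => ¬ d i = -1)).card = 2 ^ n := by
      rw [hS, Finset.card_filter_add_card_filter_not]
      simp
    have hc : ((Finset.univ.filter (fun i => ¬ d i = -1)).card : ℝ) = N - S.card := by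
      have := congrArg (Nat.cast : ℕ → ℝ) hsum
      push_cast at this
      rw [hN]
      linarith
    rw [hc]
    ring
  -- 2 |S| ≤ ε₂ N
  have hScard : 2 * (S.card : ℝ) ≤ ε₂ * N := by
    rw [hTrBval] at hTrB
    have := hTrB
    rw [div_mul_eq_mul_div, one_mul, le_div_iff₀ hNpos] at this
    nlinarith
  -- trace decomposition
  have hTrAB : (A * B).trace = A.trace - 2 * ∑ i ∈ S, A i i := by
    rw [hBd]
    have : (A * Matrix.diagonal d).trace = ∑ i, A i i * d i := by
      simp [Matrix.trace, Matrix.diag, Matrix.mul_diagonal]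
    rw [this, Matrix.trace]
    have : ∀ i, A i i * d i = A i i - (if d i = -1 then 2 * A i i else 0) := by
      intro i
      rcases hd i with h | h
      · simp [h]; norm_num
      · simp [h]; ring
    simp only [this, Finset.sum_sub_distrib, Matrix.diag]
    congr 1
    rw [Finset.mul_sum, ← Finset.sum_filter, hS]
  -- |sum over S| ≤ |S|
  have hsumS : ‖∑ i ∈ S, A i i‖ ≤ S.card := by
    calc ‖∑ i ∈ S, A i i‖ ≤ ∑ i ∈ S, ‖A i i‖ :=
          norm_sum_le _ _
      _ ≤ ∑ i ∈ S, (1:ℝ) := Finset.sum_le_sum fun i _ =>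
          entry_norm_bound_of_unitary hA i i
      _ = S.card := by simp
  -- lower bound |Tr A|
  have hTrA' : (1 - ε₁) * N ≤ ‖A.trace‖ := by
    rw [div_mul_eq_mul_div, one_mul, le_div_iff₀ hNpos] at hTrA
    linarith [hTrA]
  have hfinal : (1 - ε₁ - 2 * ε₂) * N ≤ ‖(A * B).trace‖ := by
    rw [hTrAB]
    have h1 : ‖A.trace‖ - ‖2 * ∑ i ∈ S, A i i‖
        ≤ ‖A.trace - 2 * ∑ i ∈ S, A i i‖ := by
      exact
        norm_sub_norm_le A.trace (2 * ∑ i ∈ S, A i i)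
    have h2 : ‖2 * ∑ i ∈ S, A i i‖ ≤ 2 * S.card := by
      rw [norm_mul, Complex.norm_two]
      linarith
    nlinarith [hε₂]
  rw [div_mul_eq_mul_div, one_mul, le_div_iff₀ hNpos]
  linarith
end

section
/- Let B be a 2^n × 2^n unitary matrix over ℂ and let 0 ≤ ε be a real number such that (1/2^n)·Re(Tr(B)) ≥ 1 − ε. Then (1/2^n)‖B − I‖₁ ≤ √(2ε), where I is the 2^n × 2^n identity matrix. -/
open Matrix
open scoped ComplexOrder

lemma trace_unitary_conj {m : Type*} [Fintype m] [DecidableEq m]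
    (U : Matrix.unitaryGroup m ℂ) (D : Matrix m m ℂ) :
    ((U : Matrix m m ℂ) * D * (star U : Matrix m m ℂ)).trace = D.trace := by
  rw [Matrix.trace_mul_comm, ← Matrix.mul_assoc,
    Matrix.UnitaryGroup.star_mul_self, Matrix.one_mul]

lemma trace_re_sqrt_le {m : Type*} [Fintype m] [DecidableEq m] {P : Matrix m m ℂ}
    (hP : P.PosSemidef) :
    ((hP.1.eigenvectorUnitary.1 *
      diagonal (((↑) : ℝ → ℂ) ∘ Real.sqrt ∘ hP.1.eigenvalues) *
      (star hP.1.eigenvectorUnitary : Matrix m m ℂ)).trace).re ≤ Real.sqrt (Fintype.card m * P.trace.re) := by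
  have h1 : ((hP.1.eigenvectorUnitary.1 *
      diagonal (((↑) : ℝ → ℂ) ∘ Real.sqrt ∘ hP.1.eigenvalues) *
      (star hP.1.eigenvectorUnitary : Matrix m m ℂ)).trace) = ∑ i, (Real.sqrt (hP.1.eigenvalues i) : ℂ) := by
    rw [trace_unitary_conj, Matrix.trace_diagonal]
    rfl
  have h2 : P.trace = ∑ i, (hP.1.eigenvalues i : ℂ) := by
    conv_lhs => rw [hP.1.spectral_theorem]
    rw [Unitary.conjStarAlgAut_apply, trace_unitary_conj, Matrix.trace_diagonal]
    rfl
  have h2' : P.trace.re = ∑ i, hP.1.eigenvalues i := by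
    rw [h2, Complex.re_sum]; simp
  rw [h1, Complex.re_sum]
  simp only [Complex.ofReal_re]
  have hcs : (∑ i, Real.sqrt (hP.1.eigenvalues i)) ^ 2 ≤
      (Fintype.card m : ℝ) * ∑ i, hP.1.eigenvalues i := by
    have := sq_sum_le_card_mul_sum_sq (s := Finset.univ)
      (f := fun i => Real.sqrt (hP.1.eigenvalues i))
    simp only [Finset.card_univ] at this
    refine this.trans ?_
    gcongr with i
    rw [Real.sq_sqrt (hP.eigenvalues_nonneg i)]
  rw [h2']
  exact (Real.le_sqrt (Finset.sum_nonneg fun i _ => Real.sqrt_nonneg _)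
    (mul_nonneg (Nat.cast_nonneg _) (Finset.sum_nonneg fun i _ => hP.eigenvalues_nonneg i))).mpr hcs

/-- The trace norm (Schatten 1-norm) of a complex square matrix: the trace of the
positive semidefinite square root of `Mᴴ * M`. -/
noncomputable def traceNorm {m : Type*} [Fintype m] [DecidableEq m] (M : Matrix m m ℂ) : ℝ :=
  (((Matrix.posSemidef_conjTranspose_mul_self M).1.eigenvectorUnitary.1 *
      diagonal (((↑) : ℝ → ℂ) ∘ Real.sqrt ∘ (Matrix.posSemidef_conjTranspose_mul_self M).1.eigenvalues) *
      (star (Matrix.posSemidef_conjTranspose_mul_self M).1.eigenvectorUnitary : Matrix m m ℂ)).trace).re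

theorem traceNorm_sub_one_le_of_re_trace_large (n : ℕ) (ε : ℝ) (hε : 0 ≤ ε)
    (B : Matrix (Fin (2 ^ n)) (Fin (2 ^ n)) ℂ)
    (hB : B ∈ Matrix.unitaryGroup (Fin (2 ^ n)) ℂ)
    (hTrB : 1 - ε ≤ (1 / 2 ^ n) * B.trace.re) :
    (1 / 2 ^ n) * traceNorm (B - 1) ≤ Real.sqrt (2 * ε) := by
  set N : ℝ := 2 ^ n with hN
  have hNpos : (0 : ℝ) < N := by positivity
  have hcard : (Fintype.card (Fin (2 ^ n)) : ℝ) = N := by simp [hN]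
  have key := trace_re_sqrt_le (Matrix.posSemidef_conjTranspose_mul_self (B - 1))
  rw [hcard] at key
  -- compute the matrix (B-1)ᴴ * (B-1)
  have hBB : Bᴴ * B = 1 := by
    have := hB.1
    rwa [Matrix.star_eq_conjTranspose] at this
  have hsplit : (B - 1)ᴴ * (B - 1) = 1 - Bᴴ - B + 1 := by
    simp only [conjTranspose_sub, conjTranspose_one, sub_mul, mul_sub, one_mul, mul_one, hBB]
    abel
  have htr : ((B - 1)ᴴ * (B - 1)).trace.re = 2 * N - 2 * B.trace.re := by
    rw [hsplit]
    simp only [Matrix.trace_add, Matrix.trace_sub, Matrix.trace_one,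
      Matrix.trace_conjTranspose]
    simp only [Complex.add_re, Complex.sub_re, Complex.natCast_re, Complex.star_def, Complex.conj_re]
    rw [hcard]; ring
  have hbound : ((B - 1)ᴴ * (B - 1)).trace.re ≤ 2 * N * ε := by
    rw [htr]
    have h1 : (1 - ε) * N ≤ B.trace.re := by
      rw [one_div, inv_mul_eq_div, le_div_iff₀ hNpos] at hTrB
      exact hTrB
    nlinarith
  have hfinal : traceNorm (B - 1) ≤ N * Real.sqrt (2 * ε) := by
    have : traceNorm (B - 1) ≤ Real.sqrt (N * (2 * N * ε)) := by
      refine key.trans (Real.sqrt_le_sqrt ?_)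
      exact mul_le_mul_of_nonneg_left hbound hNpos.le
    rw [show N * (2 * N * ε) = N ^ 2 * (2 * ε) by ring, Real.sqrt_mul (by positivity),
      Real.sqrt_sq hNpos.le] at this
    exact this
  calc 1 / N * traceNorm (B - 1) ≤ 1 / N * (N * Real.sqrt (2 * ε)) := by
        exact mul_le_mul_of_nonneg_left hfinal (by positivity)
    _ = Real.sqrt (2 * ε) := by field_simp
end

section
/- Let ω_f ≠ ω_g be two elements of {0,1}^n and let f, g : {0,1}^n → {−1,1} be defined by f(x) = −1 if and only if x = ω_f, and g(x) = −1 if and only if x = ω_g. Let D_f and D_g be the 2^n × 2^n diagonal matrices with (D_f)_{x,x} = f(x) and (D_g)_{x,x} = g(x). Let r ≥ 1 and let V₀, V₁, …, V_r be 2^n × 2^n unitary matrices over ℂ, and define A = V₀·D_f·V₁·D_f·V₂⋯D_f·V_r and A' = V₀·D_g·V₁·D_g·V₂⋯D_g·V_r (the alternating products containing r copies of the oracle). Then (1/2^n)|Tr(Aᴴ A')| ≥ 1 − (8r − 4)/2^n. -/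
open Matrix
open scoped ComplexOrder

variable {m : Type*} [Fintype m] [DecidableEq m]

lemma aux_unitary_entry_le (U : Matrix m m ℂ) (hU : U ∈ Matrix.unitaryGroup m ℂ)
    (i j : m) : ‖U i j‖ ≤ 1 := by
  have h1 : Uᴴ * U = 1 := Matrix.UnitaryGroup.star_mul_self ⟨U, hU⟩
  have h2 : (Uᴴ * U) j j = 1 := by rw [h1]; simp
  rw [Matrix.mul_apply] at h2
  have h3 : ∀ k, Uᴴ j k * U k j = (Complex.normSq (U k j) : ℂ) := by
    intro k
    simp [Matrix.conjTranspose_apply, Complex.normSq_eq_conj_mul_self]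
  simp only [h3] at h2
  have h4 : (∑ k, Complex.normSq (U k j)) = 1 := by
    have := congrArg Complex.re h2
    simpa using this
  have h5 : Complex.normSq (U i j) ≤ 1 := by
    rw [← h4]
    exact Finset.single_le_sum (f := fun k => Complex.normSq (U k j)) (fun k _ => Complex.normSq_nonneg _) (Finset.mem_univ i)
  rw [Complex.norm_def]
  exact Real.sqrt_le_one.mpr h5

lemma aux_diag_unitary (d : m → ℂ) (hd : ∀ x, d x = 1 ∨ d x = -1) :
    Matrix.diagonal d ∈ Matrix.unitaryGroup m ℂ := by
  have hstar : star d = d := funext fun x => by rcases hd x with h | h <;> simp [h, Pi.star_apply]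
  have hdd : (fun x => d x * d x) = fun _ => (1:ℂ) :=
    funext fun x => by rcases hd x with h | h <;> simp [h]
  constructor <;>
  · show _ = (1 : Matrix m m ℂ)
    rw [Matrix.star_eq_conjTranspose, Matrix.diagonal_conjTranspose, hstar,
      Matrix.diagonal_mul_diagonal, hdd, Matrix.diagonal_one]

lemma aux_trace_diff_bound (ωf ωg : m) (hω : ωf ≠ ωg) (W : Matrix m m ℂ)
    (hW : W ∈ Matrix.unitaryGroup m ℂ) :
    ‖(W * Matrix.diagonal (fun x => if x = ωg then (-1:ℂ) else 1)).trace
      - (W * Matrix.diagonal (fun x => if x = ωf then (-1:ℂ) else 1)).trace‖ ≤ 4 := by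
  have htr : ∀ d : m → ℂ, (W * Matrix.diagonal d).trace = ∑ x, W x x * d x := by
    intro d
    simp [Matrix.trace, Matrix.diag, Matrix.mul_diagonal]
  rw [htr, htr, ← Finset.sum_sub_distrib]
  have hfun : ∀ x, W x x * (if x = ωg then (-1:ℂ) else 1) - W x x * (if x = ωf then (-1:ℂ) else 1)
      = (if x = ωg then (-2:ℂ) * W x x else 0) + (if x = ωf then (2:ℂ) * W x x else 0) := by
    intro x
    split_ifs with h1 h2 <;> first | (exfalso; exact hω (h2 ▸ h1 ▸ rfl)) | ring
  simp only [hfun]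
  rw [Finset.sum_add_distrib, Finset.sum_ite_eq' Finset.univ ωg, Finset.sum_ite_eq' Finset.univ ωf]
  simp only [Finset.mem_univ, if_true]
  calc ‖(-2:ℂ) * W ωg ωg + 2 * W ωf ωf‖
      ≤ ‖(-2:ℂ) * W ωg ωg‖ + ‖(2:ℂ) * W ωf ωf‖ := norm_add_le _ _
    _ = 2 * ‖W ωg ωg‖ + 2 * ‖W ωf ωf‖ := by
        simp [norm_mul]
    _ ≤ 2 * 1 + 2 * 1 := by
        gcongr <;> exact aux_unitary_entry_le W hW _ _
    _ = 4 := by norm_num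

noncomputable def oDiag (ω : m) : Matrix m m ℂ :=
  Matrix.diagonal fun x => if x = ω then (-1:ℂ) else 1

lemma oDiag_unitary (ω : m) : oDiag ω ∈ Matrix.unitaryGroup m ℂ :=
  aux_diag_unitary _ fun x => by by_cases h : x = ω <;> simp [h]

lemma aux_prod_unitary (ω : m) (V : ℕ → Matrix m m ℂ) (r : ℕ)
    (hV : ∀ i ≤ r, V i ∈ Matrix.unitaryGroup m ℂ) :
    ((List.range r).map fun i => oDiag ω * V (i+1)).prod ∈ Matrix.unitaryGroup m ℂ := by
  apply Submonoid.list_prod_mem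
  intro x hx
  obtain ⟨i, hi, rfl⟩ := List.mem_map.mp hx
  exact mul_mem (oDiag_unitary ω) (hV (i+1) (List.mem_range.mp hi))

lemma aux_key (ωf ωg : m) (hω : ωf ≠ ωg) (V : ℕ → Matrix m m ℂ) :
    ∀ r : ℕ, (∀ i ≤ r, V i ∈ Matrix.unitaryGroup m ℂ) →
      ∀ U ∈ Matrix.unitaryGroup m ℂ,
      ‖(U * ((List.range r).map fun i => oDiag ωg * V (i+1)).prod).trace
        - (U * ((List.range r).map fun i => oDiag ωf * V (i+1)).prod).trace‖ ≤ 4 * r := by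
  intro r
  induction r with
  | zero => intro _ U _; simp
  | succ r ih =>
    intro hV U hU
    have hV' : ∀ i ≤ r, V i ∈ Matrix.unitaryGroup m ℂ := fun i hi => hV i (hi.trans (Nat.le_succ r))
    have hW : V (r+1) ∈ Matrix.unitaryGroup m ℂ := hV (r+1) le_rfl
    set Pg := ((List.range r).map fun i => oDiag ωg * V (i+1)).prod with hPg
    set Pf := ((List.range r).map fun i => oDiag ωf * V (i+1)).prod with hPf
    set W := V (r+1)
    have hsplit : ∀ ω : m, ((List.range (r+1)).map fun i => oDiag ω * V (i+1)).prod
        = ((List.range r).map fun i => oDiag ω * V (i+1)).prod * (oDiag ω * W) := by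
      intro ω
      rw [List.range_succ, List.map_append, List.prod_append]
      simp
      rfl
    rw [hsplit, hsplit, ← hPg, ← hPf]
    have key : (U * (Pg * (oDiag ωg * W))).trace - (U * (Pf * (oDiag ωf * W))).trace
        = ((oDiag ωg * W * U) * Pg).trace - ((oDiag ωg * W * U) * Pf).trace
          + (((W * U * Pf) * oDiag ωg).trace - ((W * U * Pf) * oDiag ωf).trace) := by
      have e1 : ∀ P : Matrix m m ℂ, (U * (P * (oDiag ωg * W))).trace
          = ((oDiag ωg * W * U) * P).trace := by
        intro P
        rw [show U * (P * (oDiag ωg * W)) = (U * P) * (oDiag ωg * W) by noncomm_ring,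
          Matrix.trace_mul_comm,
          show (oDiag ωg * W) * (U * P) = (oDiag ωg * W * U) * P by noncomm_ring]
      have e2 : ∀ D : Matrix m m ℂ, (U * (Pf * (D * W))).trace = ((W * U * Pf) * D).trace := by
        intro D
        rw [show U * (Pf * (D * W)) = (U * Pf * D) * W by noncomm_ring,
          Matrix.trace_mul_comm,
          show W * (U * Pf * D) = (W * U * Pf) * D by noncomm_ring]
      rw [e1 Pg, e2 (oDiag ωf)]
      have e3 : (oDiag ωg * W * U * Pf).trace = ((W * U * Pf) * oDiag ωg).trace :=
        (e1 Pf).symm.trans (e2 _)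
      rw [e3]
      ring
    rw [key]
    have hPfU : Pf ∈ Matrix.unitaryGroup m ℂ := aux_prod_unitary ωf V r hV'
    have b1 := ih hV' (oDiag ωg * W * U) (mul_mem (mul_mem (oDiag_unitary ωg) hW) hU)
    have b2 := aux_trace_diff_bound ωf ωg hω (W * U * Pf) (mul_mem (mul_mem hW hU) hPfU)
    calc ‖_‖ ≤ ‖((oDiag ωg * W * U) * Pg).trace - ((oDiag ωg * W * U) * Pf).trace‖
          + ‖((W * U * Pf) * oDiag ωg).trace - ((W * U * Pf) * oDiag ωf).trace‖ :=
        norm_add_le _ _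
      _ ≤ 4 * r + 4 := add_le_add b1 b2
      _ = 4 * (r + 1 : ℕ) := by push_cast; ring

theorem grover_oracle_fidelity_lower_bound (n r : ℕ) (hr : 1 ≤ r)
    (ωf ωg : Fin n → ZMod 2) (hω : ωf ≠ ωg)
    (Df Dg : Matrix (Fin n → ZMod 2) (Fin n → ZMod 2) ℂ)
    (hDf : Df = Matrix.diagonal fun x => if x = ωf then (-1 : ℂ) else 1)
    (hDg : Dg = Matrix.diagonal fun x => if x = ωg then (-1 : ℂ) else 1)
    (V : ℕ → Matrix (Fin n → ZMod 2) (Fin n → ZMod 2) ℂ)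
    (hV : ∀ i ≤ r, V i ∈ Matrix.unitaryGroup (Fin n → ZMod 2) ℂ)
    (A A' : Matrix (Fin n → ZMod 2) (Fin n → ZMod 2) ℂ)
    (hA : A = V 0 * ((List.range r).map fun i => Df * V (i + 1)).prod)
    (hA' : A' = V 0 * ((List.range r).map fun i => Dg * V (i + 1)).prod) :
    1 - (8 * (r : ℝ) - 4) / 2 ^ n ≤ (1 / 2 ^ n) * ‖(Aᴴ * A').trace‖ := by
  have hDf' : Df = oDiag ωf := hDf
  have hDg' : Dg = oDiag ωg := hDg
  set F := ((List.range r).map fun i => oDiag ωf * V (i + 1)).prod with hF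
  set G := ((List.range r).map fun i => oDiag ωg * V (i + 1)).prod with hG
  have hFU : F ∈ Matrix.unitaryGroup (Fin n → ZMod 2) ℂ := aux_prod_unitary ωf V r hV
  have hFHU : Fᴴ ∈ Matrix.unitaryGroup (Fin n → ZMod 2) ℂ := by
    rw [← Matrix.star_eq_conjTranspose]
    exact Unitary.star_mem hFU
  have hV0 : (V 0)ᴴ * V 0 = 1 := by
    rw [← Matrix.star_eq_conjTranspose]
    exact (hV 0 (Nat.zero_le r)).1
  have hAA' : Aᴴ * A' = Fᴴ * G := by
    rw [hA, hA', hDf', hDg', ← hF, ← hG, Matrix.conjTranspose_mul,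
      show Fᴴ * (V 0)ᴴ * (V 0 * G) = Fᴴ * ((V 0)ᴴ * V 0) * G by noncomm_ring, hV0, mul_one]
  have hFHF : (Fᴴ * F).trace = (2 : ℂ) ^ n := by
    have : Fᴴ * F = 1 := by
      rw [← Matrix.star_eq_conjTranspose]; exact hFU.1
    rw [this, Matrix.trace_one]
    norm_num [Fintype.card_fun, ZMod.card]
  have hkey := aux_key ωf ωg hω V r hV Fᴴ hFHU
  rw [← hF, ← hG] at hkey
  have hT : (2:ℝ) ^ n - 4 * r ≤ ‖(Fᴴ * G).trace‖ := by
    have h1 : ‖(Fᴴ * F).trace‖ - ‖(Fᴴ * F).trace - (Fᴴ * G).trace‖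
        ≤ ‖(Fᴴ * G).trace‖ := by
      have h := norm_sub_norm_le ((Fᴴ * F).trace) ((Fᴴ * F).trace - (Fᴴ * G).trace)
      simpa [sub_sub_cancel] using h
    have h2 : ‖(Fᴴ * F).trace - (Fᴴ * G).trace‖ ≤ 4 * r := by
      rw [norm_sub_rev]
      exact hkey
    have h3 : ‖(Fᴴ * F).trace‖ = (2:ℝ) ^ n := by
      rw [hFHF]
      simp [map_pow]
    linarith
  rw [hAA']
  have h2pos : (0:ℝ) < 2 ^ n := by positivity
  have hr1 : (1:ℝ) ≤ (r:ℝ) := by exact_mod_cast hr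
  have hkey2 : (2:ℝ) ^ n - (8 * r - 4) ≤ ‖(Fᴴ * G).trace‖ := by nlinarith
  calc 1 - (8 * (r:ℝ) - 4) / 2 ^ n = ((2:ℝ) ^ n - (8 * r - 4)) / 2 ^ n := by
        field_simp
    _ ≤ ‖(Fᴴ * G).trace‖ / 2 ^ n := by gcongr
    _ = (1 / 2 ^ n) * ‖(Fᴴ * G).trace‖ := by ring
end

section
/- Let V = (ZMod 2)^n, let C be any 2^n × 2^n complex matrix indexed by V, and let f : V × V → ℝ. For s ∈ V let Z^s be the diagonal matrix with (Z^s)_{w,w} = (−1)^{s·w}, and for (s,s') ∈ V × V let f̂_{s,s'} = 2^{−2n} Σ_{w,z ∈ V} f(w,z)·(−1)^{s·w}·(−1)^{s'·z}. Then (1/2^n) Σ_{w,z ∈ V} |C_{z,w}|² · f(w,z) = Σ_{s,s' ∈ V} f̂_{s,s'} · (1/2^n)·Tr(Z^s · Cᴴ · Z^{s'} · C). -/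
open Matrix
open scoped ComplexOrder

/-- The real sign `(-1)^a` of an element `a : ZMod 2`. -/
def signOf (a : ZMod 2) : ℝ := if a = 0 then 1 else -1

lemma signOf_add (a b : ZMod 2) : signOf (a + b) = signOf a * signOf b := by
  rcases (by decide : ∀ x : ZMod 2, x = 0 ∨ x = 1) a with rfl | rfl <;>
    rcases (by decide : ∀ x : ZMod 2, x = 0 ∨ x = 1) b with rfl | rfl <;>
    simp [signOf, show (1 : ZMod 2) + 1 = 0 from rfl, show (1 : ZMod 2) ≠ 0 by decide]

lemma zmod2_ne (a : ZMod 2) (h : a ≠ 0) : a = 1 := by revert h; revert a; decide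

lemma signOf_add_one (a : ZMod 2) : signOf (a + 1) = - signOf a := by
  rcases (by decide : ∀ x : ZMod 2, x = 0 ∨ x = 1) a with rfl | rfl <;>
    simp [signOf, show (1 : ZMod 2) + 1 = 0 from rfl, show (1 : ZMod 2) ≠ 0 by decide]

lemma sum_signOf {n : ℕ} (v : Fin n → ZMod 2) (hv : v ≠ 0) :
    ∑ s : Fin n → ZMod 2, signOf (s ⬝ᵥ v) = 0 := by
  obtain ⟨i, hi⟩ : ∃ i, v i ≠ 0 := by
    by_contra h; push_neg at h; exact hv (funext h)
  set e : Fin n → ZMod 2 := fun j => if j = i then 1 else 0 with he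
  have hedv : e ⬝ᵥ v = 1 := by
    simp only [dotProduct, he, ite_mul, one_mul, zero_mul]
    rw [Finset.sum_ite_eq' Finset.univ i v]
    simp [zmod2_ne _ hi]
  have key : ∀ s : Fin n → ZMod 2, signOf ((s + e) ⬝ᵥ v) = - signOf (s ⬝ᵥ v) := by
    intro s
    rw [add_dotProduct, hedv, signOf_add_one]
  have h2 : ∑ s : Fin n → ZMod 2, signOf (s ⬝ᵥ v)
      = ∑ s : Fin n → ZMod 2, signOf ((s + e) ⬝ᵥ v) :=
    (Fintype.sum_equiv (Equiv.addRight e) _ _ (fun s => rfl)).symm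
  simp only [key, Finset.sum_neg_distrib] at h2
  linarith

lemma zmod2_add_eq_zero (a b : ZMod 2) (h : a + b = 0) : a = b := by
  revert h; revert a b; decide

lemma ortho {n : ℕ} (w w' : Fin n → ZMod 2) :
    ∑ s : Fin n → ZMod 2, (signOf (s ⬝ᵥ w) : ℂ) * (signOf (s ⬝ᵥ w') : ℂ) =
      if w = w' then (2 : ℂ) ^ n else 0 := by
  have key : ∑ s : Fin n → ZMod 2, signOf (s ⬝ᵥ w) * signOf (s ⬝ᵥ w') =
      if w = w' then (2 : ℝ) ^ n else 0 := by
    have h1 : ∀ s : Fin n → ZMod 2, signOf (s ⬝ᵥ w) * signOf (s ⬝ᵥ w')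
        = signOf (s ⬝ᵥ (w + w')) := by
      intro s; rw [dotProduct_add, signOf_add]
    simp only [h1]
    by_cases h : w = w'
    · subst h
      have h0 : w + w = 0 := by
        funext i
        have : w i + w i = 0 := by generalize w i = a; revert a; decide
        exact this
      simp [h0, signOf, Finset.card_univ]
    · rw [if_neg h]
      apply sum_signOf
      intro hc
      exact h (funext fun i => zmod2_add_eq_zero _ _ (congrFun hc i))
  calc ∑ s : Fin n → ZMod 2, (signOf (s ⬝ᵥ w) : ℂ) * (signOf (s ⬝ᵥ w') : ℂ)
      = ((∑ s : Fin n → ZMod 2, signOf (s ⬝ᵥ w) * signOf (s ⬝ᵥ w') : ℝ) : ℂ) := by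
        push_cast; rfl
    _ = _ := by rw [key]; split <;> push_cast <;> rfl

lemma L1 {S V : Type*} [Fintype S] [Fintype V] [DecidableEq V] (g : S → V → ℂ) (N : ℂ)
    (h : ∀ w w', ∑ s, g s w * g s w' = if w = w' then N else 0)
    (A B : V → ℂ) :
    ∑ s, (∑ w, A w * g s w) * (∑ w, g s w * B w) = N * ∑ w, A w * B w := by
  calc ∑ s, (∑ w, A w * g s w) * (∑ w, g s w * B w)
      = ∑ s, ∑ w, ∑ w', (A w * B w') * (g s w * g s w') := by
        simp only [Finset.sum_mul_sum]; congr 1; funext s; congr 1; funext w; congr 1; funext w'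
        ring
    _ = ∑ w, ∑ w', ∑ s, (A w * B w') * (g s w * g s w') := by
        rw [Finset.sum_comm]; congr 1; funext w; rw [Finset.sum_comm]
    _ = ∑ w, ∑ w', (A w * B w') * (if w = w' then N else 0) := by
        simp only [← Finset.mul_sum]; congr 1; funext w; congr 1; funext w'; rw [h]
    _ = N * ∑ w, A w * B w := by
        simp only [mul_ite, mul_zero, Finset.sum_ite_eq, Finset.mem_univ, if_true]
        rw [Finset.mul_sum]; congr 1; funext w; ring

lemma trace_eq {m : Type*} [Fintype m] [DecidableEq m]
    (C : Matrix m m ℂ) (d e : m → ℂ) :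
    (Matrix.diagonal d * Cᴴ * Matrix.diagonal e * C).trace
      = ∑ w, ∑ z, d w * e z * ((‖C z w‖ : ℂ)) ^ 2 := by
  simp only [Matrix.trace, Matrix.diag, Matrix.mul_apply, Matrix.conjTranspose_apply,
    Matrix.diagonal_apply, ite_mul, zero_mul, Finset.sum_ite_eq, Finset.mem_univ, if_true,
    mul_ite, mul_zero, Finset.sum_ite_eq', Finset.sum_mul]
  congr 1; funext w; congr 1; funext z
  have h : (starRingEnd ℂ) (C z w) * C z w = ((‖C z w‖ : ℂ)) ^ 2 := by
    rw [mul_comm, Complex.mul_conj, Complex.normSq_eq_norm_sq]; push_cast; ring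
  calc d w * star (C z w) * e z * C z w
      = d w * e z * ((starRingEnd ℂ) (C z w) * C z w) := by rw [RCLike.star_def]; ring
    _ = d w * e z * ((‖C z w‖ : ℂ)) ^ 2 := by rw [h]

theorem half_bqp_fourier_representation (n : ℕ)
    (C : Matrix (Fin n → ZMod 2) (Fin n → ZMod 2) ℂ)
    (f : (Fin n → ZMod 2) × (Fin n → ZMod 2) → ℝ) :
    (((1 / 2 ^ n) * ∑ w, ∑ z, ‖C z w‖ ^ 2 * f (w, z) : ℝ) : ℂ) =
      ∑ s, ∑ s',
        (((2 : ℝ) ^ (2 * n))⁻¹ *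
            ∑ w, ∑ z, f (w, z) * signOf (s ⬝ᵥ w) * signOf (s' ⬝ᵥ z) : ℝ) *
          ((1 / 2 ^ n : ℂ) *
            (Matrix.diagonal (fun w => (signOf (s ⬝ᵥ w) : ℂ)) * Cᴴ *
                Matrix.diagonal (fun z => (signOf (s' ⬝ᵥ z) : ℂ)) * C).trace) := by
  classical
  set g : ((Fin n → ZMod 2) × (Fin n → ZMod 2)) → ((Fin n → ZMod 2) × (Fin n → ZMod 2)) → ℂ :=
    fun p u => (signOf (p.1 ⬝ᵥ u.1) : ℂ) * (signOf (p.2 ⬝ᵥ u.2) : ℂ) with hg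
  set A : (Fin n → ZMod 2) × (Fin n → ZMod 2) → ℂ := fun u => (f u : ℂ) with hA
  set B : (Fin n → ZMod 2) × (Fin n → ZMod 2) → ℂ := fun u => ((‖C u.2 u.1‖ : ℂ)) ^ 2 with hB
  have hortho : ∀ u u' : (Fin n → ZMod 2) × (Fin n → ZMod 2), ∑ p : (Fin n → ZMod 2) × (Fin n → ZMod 2), g p u * g p u'
      = if u = u' then (2 : ℂ) ^ n * (2 : ℂ) ^ n else 0 := by
    intro u u'
    rw [Fintype.sum_prod_type]
    calc ∑ s : (Fin n → ZMod 2), ∑ s' : (Fin n → ZMod 2), g (s, s') u * g (s, s') u'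
        = ∑ s : (Fin n → ZMod 2), ∑ s' : (Fin n → ZMod 2),
            ((signOf (s ⬝ᵥ u.1) : ℂ) * (signOf (s ⬝ᵥ u'.1) : ℂ)) *
            ((signOf (s' ⬝ᵥ u.2) : ℂ) * (signOf (s' ⬝ᵥ u'.2) : ℂ)) := by
          congr 1; funext s; congr 1; funext s'; simp only [hg]; ring
      _ = (∑ s : (Fin n → ZMod 2), (signOf (s ⬝ᵥ u.1) : ℂ) * (signOf (s ⬝ᵥ u'.1) : ℂ)) *
            (∑ s' : (Fin n → ZMod 2), (signOf (s' ⬝ᵥ u.2) : ℂ) * (signOf (s' ⬝ᵥ u'.2) : ℂ)) := by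
          rw [Finset.sum_mul_sum]
      _ = _ := by
          rw [ortho, ortho]
          by_cases h1 : u.1 = u'.1 <;> by_cases h2 : u.2 = u'.2 <;>
            simp [h1, h2, Prod.ext_iff]
  have hL := L1 g ((2 : ℂ) ^ n * (2 : ℂ) ^ n) hortho A B
  have h2n : ((2 : ℂ) ^ n) ≠ 0 := by positivity
  calc (((1 / 2 ^ n) * ∑ w, ∑ z, ‖C z w‖ ^ 2 * f (w, z) : ℝ) : ℂ)
      = (1 / 2 ^ n : ℂ) * ∑ w, ∑ z, ((‖C z w‖ : ℂ)) ^ 2 * (f (w, z) : ℂ) := by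
        push_cast; ring_nf
    _ = ((2 : ℂ) ^ (2 * n))⁻¹ * (1 / 2 ^ n) *
          (((2 : ℂ) ^ n * (2 : ℂ) ^ n) * ∑ u : (Fin n → ZMod 2) × (Fin n → ZMod 2), A u * B u) := by
        have hT : (∑ u : (Fin n → ZMod 2) × (Fin n → ZMod 2), A u * B u)
            = ∑ w, ∑ z, ((‖C z w‖ : ℂ)) ^ 2 * (f (w, z) : ℂ) := by
          rw [Fintype.sum_prod_type]
          congr 1; funext w; congr 1; funext z; simp only [hA, hB]; try ring
        rw [hT, pow_mul]
        generalize (∑ w, ∑ z, ((‖C z w‖ : ℂ)) ^ 2 * (f (w, z) : ℂ)) = S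
        have h4 : ((2 : ℂ) ^ n * (2 : ℂ) ^ n) ≠ 0 := mul_ne_zero h2n h2n
        rw [show ((2 : ℂ) ^ 2) ^ n = 2 ^ n * 2 ^ n by
          rw [show ((2 : ℂ) ^ 2) = 2 * 2 by norm_num, mul_pow]]
        field_simp
    _ = ((2 : ℂ) ^ (2 * n))⁻¹ * (1 / 2 ^ n) *
          ∑ p : (Fin n → ZMod 2) × (Fin n → ZMod 2), (∑ u, A u * g p u) * (∑ u, g p u * B u) := by rw [hL]
    _ = ∑ s, ∑ s', ((2 : ℂ) ^ (2 * n))⁻¹ * (1 / 2 ^ n) *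
          ((∑ u, A u * g (s, s') u) * (∑ u, g (s, s') u * B u)) := by
        rw [Finset.mul_sum, Fintype.sum_prod_type]
    _ = _ := by
        refine Finset.sum_congr rfl fun s _ => Finset.sum_congr rfl fun s' _ => ?_
        rw [trace_eq]
        rw [show ((((2 : ℝ) ^ (2 * n))⁻¹ *
            ∑ w, ∑ z, f (w, z) * signOf (s ⬝ᵥ w) * signOf (s' ⬝ᵥ z) : ℝ) : ℂ)
          = ((2 : ℂ) ^ (2 * n))⁻¹ *
            ∑ w, ∑ z, (f (w, z) : ℂ) * (signOf (s ⬝ᵥ w) : ℂ) * (signOf (s' ⬝ᵥ z) : ℂ) by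
          push_cast; try ring]
        have hP : (∑ u, A u * g (s, s') u)
            = ∑ w, ∑ z, (f (w, z) : ℂ) * (signOf (s ⬝ᵥ w) : ℂ) * (signOf (s' ⬝ᵥ z) : ℂ) := by
          rw [Fintype.sum_prod_type]
          congr 1; funext w; congr 1; funext z; simp only [hA, hg]; try ring
        have hQ : (∑ u, g (s, s') u * B u)
            = ∑ w, ∑ z, (signOf (s ⬝ᵥ w) : ℂ) * (signOf (s' ⬝ᵥ z) : ℂ) *
                ((‖C z w‖ : ℂ)) ^ 2 := by
          rw [Fintype.sum_prod_type]
        rw [hP, hQ]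
        ring
end

section
/- Let V = (ZMod 2)^n, let f : V → ℂ, let D_f be the diagonal matrix with (D_f)_{x,x} = f(x), and let H be the 2^n × 2^n Hadamard matrix with entries H_{x,y} = 2^{−n/2}(−1)^{x·y}. Then for all y, w ∈ V, the (y,w) entry of H·D_f·H equals f̂(y + w), where f̂(s) = 2^{−n} Σ_{x∈V} f(x)(−1)^{x·s}. In particular, when f takes values in {−1,1}, the probability of measuring outcome y when the circuit H·D_f·H is applied to the basis state |w⟩ is f̂(y + w)². -/
open Matrix
open scoped ComplexOrder

/-- Fourier coefficient of `f : (Fin n → ZMod 2) → ℂ` at `s`. -/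
noncomputable def booleanFourierCoeff {n : ℕ} (f : (Fin n → ZMod 2) → ℂ) (s : Fin n → ZMod 2) : ℂ :=
  ((2 : ℂ) ^ n)⁻¹ * ∑ x, f x * (signOf (x ⬝ᵥ s) : ℝ)

lemma im_two_pow (n : ℕ) : ((2:ℂ)^n).im = 0 := by
  induction n with
  | zero => simp
  | succ k ih => rw [pow_succ]; simp [Complex.mul_im, ih]

theorem half_bqp_fourier_sampling (n : ℕ) (f : (Fin n → ZMod 2) → ℂ)
    (H : Matrix (Fin n → ZMod 2) (Fin n → ZMod 2) ℂ)
    (hH : H = Matrix.of fun x y => (((Real.sqrt (2 ^ n))⁻¹ * signOf (x ⬝ᵥ y) : ℝ) : ℂ))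
    (Df : Matrix (Fin n → ZMod 2) (Fin n → ZMod 2) ℂ)
    (hDf : Df = Matrix.diagonal f) (y w : Fin n → ZMod 2) :
    (H * Df * H) y w = booleanFourierCoeff f (y + w) ∧
      ((∀ x, f x = 1 ∨ f x = -1) →
        ‖(H * Df * H) y w‖ ^ 2 = (booleanFourierCoeff f (y + w)).re ^ 2) := by
  have key : (H * Df * H) y w = booleanFourierCoeff f (y + w) := by
    subst hH hDf
    rw [Matrix.mul_apply]
    simp only [Matrix.mul_diagonal, Matrix.of_apply, booleanFourierCoeff]
    rw [Finset.mul_sum]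
    apply Finset.sum_congr rfl
    intro x _
    have h1 : x ⬝ᵥ (y + w) = y ⬝ᵥ x + x ⬝ᵥ w := by
      rw [dotProduct_add, dotProduct_comm]
    rw [h1, signOf_add]
    have hs : ((Real.sqrt (2^n) : ℂ))⁻¹ * (Real.sqrt (2^n) : ℂ)⁻¹ = ((2:ℂ)^n)⁻¹ := by
      rw [← mul_inv]
      norm_cast
      rw [Real.mul_self_sqrt (by positivity)]
      push_cast
      ring
    rw [← hs]
    push_cast
    ring
  refine ⟨key, fun hf => ?_⟩
  rw [key]
  have h0 : ∀ x, (f x).im = 0 := by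
    intro x; rcases hf x with h | h <;> simp [h]
  have h3 := im_two_pow n
  have him : (booleanFourierCoeff f (y + w)).im = 0 := by
    simp [booleanFourierCoeff, Complex.mul_im, Complex.im_sum, h0, h3]
  rw [Complex.sq_norm, Complex.normSq_apply, him]
  ring
end

section
/- Let V = (ZMod 2)^n with n ≥ 1, let s ∈ V with s ≠ 0, let X be any type, and let f : V → X satisfy Simon's promise: for all x, y ∈ V, f(x) = f(y) if and only if x + y ∈ {0, s}. Then for every u ∈ V: (1/2^{2n}) Σ_{z ∈ range(f)} | Σ_{x : f(x) = z} (−1)^{x·u} |² equals 2^{1−n} if s·u = 0, and equals 0 if s·u = 1. -/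
open Matrix
open scoped ComplexOrder

theorem half_bqp_simons_measurement_distribution {X : Type*} [DecidableEq X]
    (n : ℕ) (hn : 1 ≤ n) (s : Fin n → ZMod 2) (hs : s ≠ 0)
    (f : (Fin n → ZMod 2) → X)
    (hf : ∀ x y, f x = f y ↔ (x + y = 0 ∨ x + y = s))
    (u : Fin n → ZMod 2) :
    (1 / 2 ^ (2 * n)) *
        ∑ z ∈ Finset.univ.image f,
          (∑ x ∈ Finset.univ.filter fun x => f x = z, signOf (x ⬝ᵥ u)) ^ 2 =
      if s ⬝ᵥ u = 0 then 2 / 2 ^ n else 0 := by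
  have hvv : ∀ v : Fin n → ZMod 2, v + v = 0 := by
    intro v; funext i
    exact (by decide : ∀ a : ZMod 2, a + a = 0) (v i)
  have hsolve : ∀ a b c : Fin n → ZMod 2, a + b = c ↔ a = c + b := by
    intro a b c
    constructor
    · intro h; rw [← h, add_assoc, hvv, add_zero]
    · intro h; rw [h, add_assoc, hvv, add_zero]
  have hne : ∀ x₀ : Fin n → ZMod 2, x₀ ≠ x₀ + s := by
    intro x₀ h
    exact hs (left_eq_add.mp h)
  have key : ∀ z ∈ Finset.univ.image f, ∃ x₀ : Fin n → ZMod 2,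
      (Finset.univ.filter fun x => f x = z) = {x₀, x₀ + s} := by
    intro z hz
    obtain ⟨x₀, -, hx₀⟩ := Finset.mem_image.mp hz
    refine ⟨x₀, ?_⟩
    ext x
    simp only [Finset.mem_filter, Finset.mem_univ, true_and, Finset.mem_insert,
      Finset.mem_singleton]
    rw [← hx₀, hf, hsolve, hsolve, zero_add, add_comm s x₀]
  set c : ℝ := if s ⬝ᵥ u = 0 then 4 else 0 with hc
  have hsum : ∀ z ∈ Finset.univ.image f,
      (∑ x ∈ Finset.univ.filter fun x => f x = z, signOf (x ⬝ᵥ u)) ^ 2 = c := by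
    intro z hz
    obtain ⟨x₀, hfib⟩ := key z hz
    rw [hfib, Finset.sum_pair (hne x₀), add_dotProduct, signOf_add]
    have ht : signOf (x₀ ⬝ᵥ u) ^ 2 = 1 := by
      by_cases h : x₀ ⬝ᵥ u = 0 <;> simp [signOf, h]
    by_cases h : s ⬝ᵥ u = 0
    · have : signOf (s ⬝ᵥ u) = 1 := by simp [signOf, h]
      rw [this, hc, if_pos h]
      ring_nf
      nlinarith [ht]
    · have : signOf (s ⬝ᵥ u) = -1 := by simp [signOf, h]
      rw [this, hc, if_neg h]
      ring
  rw [Finset.sum_congr rfl hsum, Finset.sum_const, nsmul_eq_mul]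
  have hcard : ((Finset.univ.image f).card : ℝ) * 2 = 2 ^ n := by
    have h1 : (Finset.univ : Finset (Fin n → ZMod 2)).card
        = ∑ z ∈ Finset.univ.image f, (Finset.univ.filter fun x => f x = z).card :=
      Finset.card_eq_sum_card_image f Finset.univ
    have h2 : ∀ z ∈ Finset.univ.image f,
        (Finset.univ.filter fun x => f x = z).card = 2 := by
      intro z hz
      obtain ⟨x₀, hfib⟩ := key z hz
      rw [hfib, Finset.card_pair (hne x₀)]
    rw [Finset.sum_congr rfl h2, Finset.sum_const, smul_eq_mul, mul_comm] at h1
    have h3 : (Finset.univ : Finset (Fin n → ZMod 2)).card = 2 ^ n := by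
      simp [Finset.card_univ]
    have : (Finset.univ.image f).card * 2 = 2 ^ n := by omega
    exact_mod_cast congrArg (Nat.cast : ℕ → ℝ) this
  by_cases h : s ⬝ᵥ u = 0
  · rw [hc, if_pos h, if_pos h]
    have h2n : (2:ℝ) ^ (2 * n) = 2 ^ n * 2 ^ n := by
      rw [two_mul, pow_add]
    rw [h2n]
    have hpos : (2:ℝ) ^ n ≠ 0 := by positivity
    field_simp
    nlinarith [hcard]
  · rw [hc, if_neg h, if_neg h]
    ring
end

section
/- Let Q and r be positive integers with r dividing Q, let X be a type, and let f : ZMod Q → X satisfy the period-r promise: for all a, b ∈ ZMod Q, f(a) = f(b) if and only if a − b lies in the subgroup of ZMod Q generated by r. Let ω = exp(2πi/Q). Then for every u ∈ ZMod Q: (1/Q²) Σ_{z ∈ range(f)} | Σ_{x : f(x) = z} ω^{x·u} |² equals 1/r if u lies in the subgroup of ZMod Q generated by Q/r, and equals 0 otherwise. -/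
open Finset

noncomputable def auxW (Q : ℕ) : ℂ := Complex.exp (2 * Real.pi * Complex.I / Q)

noncomputable def auxE (Q : ℕ) (t : ZMod Q) : ℂ := auxW Q ^ t.val

lemma auxW_prim (Q : ℕ) [NeZero Q] : IsPrimitiveRoot (auxW Q) Q :=
  Complex.isPrimitiveRoot_exp Q (NeZero.ne Q)

lemma auxW_pow_mod (Q : ℕ) [NeZero Q] (a : ℕ) : auxW Q ^ a = auxW Q ^ (a % Q) := by
  conv_lhs => rw [← Nat.div_add_mod a Q]
  rw [pow_add, pow_mul, (auxW_prim Q).pow_eq_one, one_pow, one_mul]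

lemma auxE_cast (Q : ℕ) [NeZero Q] (a : ℕ) : auxE Q (a : ZMod Q) = auxW Q ^ a := by
  rw [auxE, ZMod.val_natCast, ← auxW_pow_mod]

lemma auxE_mul_val (Q : ℕ) [NeZero Q] (x u : ZMod Q) :
    auxE Q (x * u) = auxW Q ^ (x.val * u.val) := by
  have h : x * u = ((x.val * u.val : ℕ) : ZMod Q) := by
    push_cast [ZMod.natCast_val, ZMod.cast_id]
    rfl
  rw [h, auxE_cast]

lemma auxE_add (Q : ℕ) [NeZero Q] (a b : ZMod Q) :
    auxE Q (a + b) = auxE Q a * auxE Q b := by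
  have h : a + b = ((a.val + b.val : ℕ) : ZMod Q) := by
    push_cast [ZMod.natCast_val, ZMod.cast_id]
    rfl
  rw [h, auxE_cast, pow_add]; rfl

lemma auxE_zero (Q : ℕ) [NeZero Q] : auxE Q 0 = 1 := by
  simp [auxE, ZMod.val_zero]

lemma auxE_nsmul (Q : ℕ) [NeZero Q] (k : ℕ) (c : ZMod Q) :
    auxE Q ((k : ZMod Q) * c) = auxE Q c ^ k := by
  induction k with
  | zero => simpa using auxE_zero Q
  | succ n ih =>
      push_cast
      rw [add_mul, one_mul, auxE_add, ih, pow_succ]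

lemma aux_mem_zmultiples (Q : ℕ) [NeZero Q] (s : ℕ) (hs : s ∣ Q) (c : ZMod Q) :
    c ∈ AddSubgroup.zmultiples ((s : ℕ) : ZMod Q) ↔ s ∣ c.val := by
  constructor
  · rintro ⟨j, rfl⟩
    have h1 : (((j • ((s : ℕ) : ZMod Q)).val : ℕ) : ZMod s)
        = ZMod.castHom hs (ZMod s) (j • ((s : ℕ) : ZMod Q)) := by
      rw [ZMod.castHom_apply, ZMod.natCast_val]
    rw [← ZMod.natCast_eq_zero_iff, h1, map_zsmul]
    simp
  · rintro ⟨t, ht⟩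
    refine ⟨(t : ℤ), ?_⟩
    have h : c = ((c.val : ℕ) : ZMod Q) := by rw [ZMod.natCast_val, ZMod.cast_id]
    rw [h, ht]
    simp only [zsmul_eq_mul]
    push_cast
    ring

theorem half_bqp_period_finding_measurement_distribution {X : Type*} [DecidableEq X]
    (Q r : ℕ) [NeZero Q] (hr : 0 < r) (hrQ : r ∣ Q)
    (f : ZMod Q → X)
    (hf : ∀ a b, f a = f b ↔ a - b ∈ AddSubgroup.zmultiples ((r : ℕ) : ZMod Q))
    (u : ZMod Q) :
    (u ∈ AddSubgroup.zmultiples ((Q / r : ℕ) : ZMod Q) →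
        (1 / (Q : ℝ) ^ 2) *
            ∑ z ∈ Finset.univ.image f,
              ‖(∑ x ∈ Finset.univ.filter fun x => f x = z,
                    Complex.exp (2 * Real.pi * Complex.I / Q) ^ (x.val * u.val))‖ ^ 2 =
          1 / r) ∧
      (u ∉ AddSubgroup.zmultiples ((Q / r : ℕ) : ZMod Q) →
        (1 / (Q : ℝ) ^ 2) *
            ∑ z ∈ Finset.univ.image f,
              ‖(∑ x ∈ Finset.univ.filter fun x => f x = z,
                    Complex.exp (2 * Real.pi * Complex.I / Q) ^ (x.val * u.val))‖ ^ 2 =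
          0) := by
  have hQ0 : 0 < Q := Nat.pos_of_ne_zero (NeZero.ne Q)
  set m := Q / r with hm
  have hm0 : 0 < m := Nat.div_pos (Nat.le_of_dvd hQ0 hrQ) hr
  have hmr : m * r = Q := Nat.div_mul_cancel hrQ
  have hrm : r * m = Q := by rw [mul_comm]; exact hmr
  have hmQ : m ∣ Q := Dvd.intro_left r hrm
  have hmemr : ∀ c : ZMod Q, c ∈ AddSubgroup.zmultiples ((r : ℕ) : ZMod Q) ↔ r ∣ c.val :=
    fun c => aux_mem_zmultiples Q r hrQ c
  have hmemm : u ∈ AddSubgroup.zmultiples ((m : ℕ) : ZMod Q) ↔ m ∣ u.val :=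
    aux_mem_zmultiples Q m hmQ u
  have hkey : m ∣ u.val ↔ ((r : ℕ) : ZMod Q) * u = 0 := by
    have h1 : ((r : ℕ) : ZMod Q) * u = ((r * u.val : ℕ) : ZMod Q) := by
      push_cast [ZMod.natCast_val, ZMod.cast_id]
      rfl
    rw [h1, ZMod.natCast_eq_zero_iff]
    constructor
    · rintro ⟨t, ht⟩
      exact ⟨t, by rw [ht, ← mul_assoc, hrm]⟩
    · rintro ⟨t, ht⟩
      refine ⟨t, Nat.eq_of_mul_eq_mul_left hr ?_⟩
      rw [ht, ← mul_assoc, hrm]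
  -- fiber description
  have hfib : ∀ a : ZMod Q,
      (Finset.univ.filter fun x => f x = f a) =
        (Finset.range m).image (fun k : ℕ => a + (k : ZMod Q) * ((r : ℕ) : ZMod Q)) := by
    intro a
    ext x
    simp only [Finset.mem_filter, Finset.mem_univ, true_and, Finset.mem_image, Finset.mem_range]
    constructor
    · intro hx
      have h1 : r ∣ (x - a).val := (hmemr _).mp ((hf x a).mp hx)
      refine ⟨(x - a).val / r, ?_, ?_⟩
      · rw [Nat.div_lt_iff_lt_mul hr, hmr]
        exact ZMod.val_lt _
      · have h2 : (((x - a).val / r : ℕ) : ZMod Q) * ((r : ℕ) : ZMod Q)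
            = (((x - a).val : ℕ) : ZMod Q) := by
          rw [← Nat.cast_mul, Nat.div_mul_cancel h1]
        rw [h2, ZMod.natCast_val, ZMod.cast_id]
        ring
    · rintro ⟨k, hk, rfl⟩
      refine (hf _ a).mpr ?_
      have h3 : a + (k : ZMod Q) * ((r : ℕ) : ZMod Q) - a = (k : ℤ) • ((r : ℕ) : ZMod Q) := by
        simp only [zsmul_eq_mul]
        push_cast
        ring
      rw [h3]
      exact AddSubgroup.zsmul_mem _ (AddSubgroup.mem_zmultiples _) _
  have hinj : ∀ a : ZMod Q,
      Set.InjOn (fun k : ℕ => a + (k : ZMod Q) * ((r : ℕ) : ZMod Q)) (Finset.range m) := by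
    intro a k hk k' hk' h
    simp only [Finset.coe_range, Set.mem_Iio] at hk hk'
    have h1 : (k : ZMod Q) * ((r : ℕ) : ZMod Q) = (k' : ZMod Q) * ((r : ℕ) : ZMod Q) :=
      add_left_cancel h
    have h2 : ((k * r : ℕ) : ZMod Q) = ((k' * r : ℕ) : ZMod Q) := by push_cast; exact h1
    have h3 : k * r = k' * r := by
      have e1 := congrArg ZMod.val h2
      rwa [ZMod.val_natCast_of_lt (lt_of_lt_of_eq ((Nat.mul_lt_mul_right hr).mpr hk) hmr),
        ZMod.val_natCast_of_lt (lt_of_lt_of_eq ((Nat.mul_lt_mul_right hr).mpr hk') hmr)] at e1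
    exact Nat.eq_of_mul_eq_mul_right hr h3
  -- inner sum
  have hsum : ∀ a : ZMod Q,
      (∑ x ∈ Finset.univ.filter fun x => f x = f a,
        Complex.exp (2 * Real.pi * Complex.I / Q) ^ (x.val * u.val)) =
      auxE Q (a * u) * ∑ k ∈ Finset.range m, (auxE Q (((r : ℕ) : ZMod Q) * u)) ^ k := by
    intro a
    rw [hfib a, Finset.sum_image (fun x hx y hy hxy => hinj a (by simpa using hx) (by simpa using hy) hxy),
      Finset.mul_sum]
    refine Finset.sum_congr rfl fun k hk => ?_
    show auxW Q ^ ((a + (k : ZMod Q) * ((r : ℕ) : ZMod Q)).val * u.val) = _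
    rw [← auxE_mul_val, ← auxE_nsmul, ← auxE_add]
    congr 1
    ring
  have habsW : ‖auxW Q‖ = 1 := by
    rw [auxW, show (2 * (Real.pi : ℂ) * Complex.I / (Q : ℂ)) = ((2 * Real.pi / Q : ℝ) : ℂ) * Complex.I by
      push_cast; ring]
    exact Complex.norm_exp_ofReal_mul_I _
  have habsE : ∀ t : ZMod Q, ‖auxE Q t‖ = 1 := fun t => by
    rw [auxE, norm_pow, habsW, one_pow]
  have hcardfib : ∀ a : ZMod Q, (Finset.univ.filter fun x => f x = f a).card = m := by
    intro a
    rw [hfib a, Finset.card_image_of_injOn (hinj a), Finset.card_range]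
  have hcard : (Finset.univ.image f).card = r := by
    have h1 : (Finset.univ : Finset (ZMod Q)).card
        = ∑ z ∈ Finset.univ.image f, (Finset.univ.filter fun x => f x = z).card :=
      Finset.card_eq_sum_card_image f Finset.univ
    have h2 : ∑ z ∈ Finset.univ.image f, (Finset.univ.filter fun x => f x = z).card
        = (Finset.univ.image f).card * m := by
      rw [Finset.sum_congr rfl fun z hz => ?_, Finset.sum_const, smul_eq_mul]
      obtain ⟨a, -, rfl⟩ := Finset.mem_image.mp hz
      exact hcardfib a
    have h3 : (Finset.univ.image f).card * m = r * m := by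
      rw [← h2, ← h1, Finset.card_univ, ZMod.card, hrm]
    exact Nat.eq_of_mul_eq_mul_right hm0 h3
  constructor
  · intro hu
    have hru : ((r : ℕ) : ZMod Q) * u = 0 := hkey.mp (hmemm.mp hu)
    have hterm : ∀ z ∈ Finset.univ.image f,
        ‖∑ x ∈ Finset.univ.filter fun x => f x = z,
          Complex.exp (2 * Real.pi * Complex.I / Q) ^ (x.val * u.val)‖ ^ 2 = (m : ℝ) ^ 2 := by
      intro z hz
      obtain ⟨a, -, rfl⟩ := Finset.mem_image.mp hz
      rw [hsum a, hru, auxE_zero]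
      simp [habsE]
    rw [Finset.sum_congr rfl hterm, Finset.sum_const, hcard, nsmul_eq_mul]
    have hQreal : (Q : ℝ) = (r : ℝ) * (m : ℝ) := by exact_mod_cast hrm.symm
    have hr0 : (r : ℝ) ≠ 0 := Nat.cast_ne_zero.mpr hr.ne'
    have hm0' : (m : ℝ) ≠ 0 := Nat.cast_ne_zero.mpr hm0.ne'
    rw [hQreal]
    field_simp
  · intro hu
    have hru : ((r : ℕ) : ZMod Q) * u ≠ 0 := fun h => hu (hmemm.mpr (hkey.mpr h))
    have hz1 : auxE Q (((r : ℕ) : ZMod Q) * u) ≠ 1 := by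
      rw [auxE]
      intro h
      have hd : Q ∣ (((r : ℕ) : ZMod Q) * u).val := (auxW_prim Q).pow_eq_one_iff_dvd _ |>.mp h
      have hv0 : (((r : ℕ) : ZMod Q) * u).val ≠ 0 := fun h0 => hru (by
        rwa [← ZMod.val_eq_zero])
      exact absurd (Nat.le_of_dvd (Nat.pos_of_ne_zero hv0) hd) (not_le.mpr (ZMod.val_lt _))
    have hzm : (auxE Q (((r : ℕ) : ZMod Q) * u)) ^ m = 1 := by
      rw [← auxE_nsmul]
      have : ((m : ℕ) : ZMod Q) * (((r : ℕ) : ZMod Q) * u) = 0 := by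
        have hq : ((m : ℕ) : ZMod Q) * ((r : ℕ) : ZMod Q) = 0 := by
          rw [← Nat.cast_mul, hmr, ZMod.natCast_self]
        rw [← mul_assoc, hq, zero_mul]
      rw [this, auxE_zero]
    have hgeom : ∑ k ∈ Finset.range m, (auxE Q (((r : ℕ) : ZMod Q) * u)) ^ k = 0 := by
      rw [geom_sum_eq hz1, hzm, sub_self, zero_div]
    have hterm : ∀ z ∈ Finset.univ.image f,
        ‖∑ x ∈ Finset.univ.filter fun x => f x = z,
          Complex.exp (2 * Real.pi * Complex.I / Q) ^ (x.val * u.val)‖ ^ 2 = 0 := by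
      intro z hz
      obtain ⟨a, -, rfl⟩ := Finset.mem_image.mp hz
      rw [hsum a, hgeom, mul_zero]
      simp
    rw [Finset.sum_congr rfl hterm, Finset.sum_const, smul_zero, mul_zero]
end
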